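/- Suppose that, for every i ∈ I, there is a proper lower semicontinuous convex function g_i : G_i → (−∞, +∞] such that F_i is the proximity operator of g_i, i.e., for every y ∈ G_i, F_i y is the unique minimizer over G_i of z ↦ g_i(z) + ‖y − z‖²/2. Let g_i* denote the Fenchel conjugate of g_i, g_i*(u) = sup_{z∈G_i} (⟪z, u⟫ − g_i(z)), and let ẽ_i denote the Moreau envelope of g_i*, ẽ_i(u) = inf_{z∈G_i} (g_i*(z) + ‖u − z‖²/2), which is real-valued on G_i. Define f : H → ℝ by f(x) = (1/2) Σ_{i∈I} ω_i (ẽ_i(L_i x) − ⟪L_i x, p_i⟫). Then a point x ∈ H is a solution to the relaxed problem (that is, x ∈ C and Σ_{i∈I} ω_i ⟪L_i(y − x), F_i(L_i x) − p_i⟫ ≥ 0 for every y ∈ C) if and only if x minimizes f over C. -/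

import Mathlib

open RealInnerProductSpace Pointwise

section aux
variable {E : Type*} [NormedAddCommGroup E] [InnerProductSpace ℝ E]

private lemma gfin (g : E → EReal) (F : E → E)
    (hproper : ∃ z, g z ≠ ⊤) (hnotbot : ∀ z, g z ≠ ⊥)
    (hprox : ∀ y z : E, z ≠ F y →
      g (F y) + ((‖y - F y‖ ^ 2 / 2 : ℝ) : EReal) < g z + ((‖y - z‖ ^ 2 / 2 : ℝ) : EReal))
    (y : E) : g (F y) = (((g (F y)).toReal : ℝ) : EReal) := by
  obtain ⟨z, hz⟩ := hproper
  have hnt : g (F y) ≠ ⊤ := by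
    by_cases hzy : z = F y
    · rw [← hzy]; exact hz
    · have := hprox y z hzy
      intro htop
      rw [htop] at this
      have hzr : g z = ((g z).toReal : EReal) := (EReal.coe_toReal hz (hnotbot z)).symm
      rw [hzr, ← EReal.coe_add] at this
      simp at this
  exact (EReal.coe_toReal hnt (hnotbot _)).symm

private lemma sg (g : E → EReal) (F : E → E)
    (hproper : ∃ z, g z ≠ ⊤) (hnotbot : ∀ z, g z ≠ ⊥)
    (hconv : ∀ z w : E, ∀ a b : ℝ, 0 ≤ a → 0 ≤ b → a + b = 1 →
      g (a • z + b • w) ≤ (a : EReal) * g z + (b : EReal) * g w)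
    (hprox : ∀ y z : E, z ≠ F y →
      g (F y) + ((‖y - F y‖ ^ 2 / 2 : ℝ) : EReal) < g z + ((‖y - z‖ ^ 2 / 2 : ℝ) : EReal))
    (v w : E) :
    (((g (F v)).toReal + ⟪v - F v, w - F v⟫ : ℝ) : EReal) ≤ g w := by
  by_cases hwt : g w = ⊤
  · rw [hwt]; exact le_top
  set γ : ℝ := (g (F v)).toReal with hγ
  have hgv : g (F v) = (γ : EReal) := gfin g F hproper hnotbot hprox v
  have hgw : g w = ((g w).toReal : EReal) := (EReal.coe_toReal hwt (hnotbot w)).symm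
  set β : ℝ := (g w).toReal
  by_cases hwfv : w = F v
  · subst hwfv; simp only [sub_self, inner_zero_right, add_zero]
    rw [hgw]
  · have key : ∀ t : ℝ, 0 < t → t ≤ 1 → γ + ⟪v - F v, w - F v⟫ - t * (‖w - F v‖^2/2) ≤ β := by
      intro t ht ht1
      have hwt' : (1 - t) • F v + t • w ≠ F v := by
        intro h
        have h2 : t • (w - F v) = ((1 - t) • F v + t • w) - F v := by
          rw [smul_sub, sub_smul, one_smul]; abel
        rw [h, sub_self] at h2
        rcases smul_eq_zero.mp h2 with h3 | h3
        · exact absurd h3 (ne_of_gt ht)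
        · exact hwfv (sub_eq_zero.mp h3)
      have hcv := hconv (F v) w (1-t) t (by linarith) (le_of_lt ht) (by ring)
      have hpx := hprox v ((1-t) • F v + t • w) hwt'
      rw [hgv, hgw] at hcv; rw [hgv] at hpx
      rw [← EReal.coe_mul, ← EReal.coe_mul, ← EReal.coe_add] at hcv
      have hcomb := lt_of_lt_of_le hpx (add_le_add_left hcv _)
      rw [← EReal.coe_add, ← EReal.coe_add, EReal.coe_lt_coe_iff] at hcomb
      have hexp : v - ((1-t) • F v + t • w) = (v - F v) - t • (w - F v) := by
        rw [sub_smul, one_smul, smul_sub]; abel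
      rw [hexp] at hcomb
      have hnrm : ‖(v - F v) - t • (w - F v)‖^2
          = ‖v - F v‖^2 - 2 * (t * ⟪v - F v, w - F v⟫) + t^2 * ‖w - F v‖^2 := by
        rw [norm_sub_sq_real, real_inner_smul_right, norm_smul]
        simp only [mul_pow, Real.norm_eq_abs, sq_abs]
        try ring
      rw [hnrm] at hcomb
      nlinarith [hcomb]
    rw [hgw, EReal.coe_le_coe_iff]
    by_contra hlt
    push_neg at hlt
    set c : ℝ := ‖w - F v‖^2/2 with hcdef
    have hc : 0 ≤ c := by positivity
    set δ : ℝ := γ + ⟪v - F v, w - F v⟫ - β with hδ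
    have hδpos : 0 < δ := by linarith
    have ht0 : (0:ℝ) < min 1 (δ/(c+1)) := lt_min one_pos (by positivity)
    have hk := key _ ht0 (min_le_left _ _)
    have h2 : min 1 (δ/(c+1)) * c ≤ (δ/(c+1)) * c :=
      mul_le_mul_of_nonneg_right (min_le_right _ _) hc
    have h3 : (δ/(c+1)) * c < δ := by
      rw [div_mul_eq_mul_div, div_lt_iff₀ (by linarith)]
      nlinarith
    linarith

private lemma env_formula (g : E → EReal) (F : E → E)
    (hproper : ∃ z, g z ≠ ⊤) (hnotbot : ∀ z, g z ≠ ⊥)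
    (hconv : ∀ z w : E, ∀ a b : ℝ, 0 ≤ a → 0 ≤ b → a + b = 1 →
      g (a • z + b • w) ≤ (a : EReal) * g z + (b : EReal) * g w)
    (hprox : ∀ y z : E, z ≠ F y →
      g (F y) + ((‖y - F y‖ ^ 2 / 2 : ℝ) : EReal) < g z + ((‖y - z‖ ^ 2 / 2 : ℝ) : EReal))
    (u : E) :
    (⨅ z : E, ((⨆ w : E, ((⟪w, z⟫ : ℝ) : EReal) - g w) + ((‖u - z‖ ^ 2 / 2 : ℝ) : EReal)))
      = ((‖u‖^2/2 - ‖u - F u‖^2/2 - (g (F u)).toReal : ℝ) : EReal) := by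
  set γ : ℝ := (g (F u)).toReal with hγ
  have hgu : g (F u) = (γ : EReal) := gfin g F hproper hnotbot hprox u
  apply le_antisymm
  · refine le_trans (iInf_le _ (u - F u)) ?_
    have hsup : (⨆ w : E, ((⟪w, u - F u⟫ : ℝ) : EReal) - g w)
        ≤ ((⟪F u, u - F u⟫ - γ : ℝ) : EReal) := by
      refine iSup_le fun w => ?_
      have hsg : (((γ + ⟪u - F u, w - F u⟫ : ℝ)) : EReal) ≤ g w :=
        sg g F hproper hnotbot hconv hprox u w
      calc ((⟪w, u - F u⟫ : ℝ) : EReal) - g w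
          ≤ ((⟪w, u - F u⟫ : ℝ) : EReal) - (((γ + ⟪u - F u, w - F u⟫ : ℝ)) : EReal) :=
            EReal.sub_le_sub le_rfl hsg
        _ = ((⟪w, u - F u⟫ - (γ + ⟪u - F u, w - F u⟫) : ℝ) : EReal) := (EReal.coe_sub _ _).symm
        _ = ((⟪F u, u - F u⟫ - γ : ℝ) : EReal) := by
            norm_cast
            have h1 : ⟪u - F u, w - F u⟫ = ⟪u - F u, w⟫ - ⟪u - F u, F u⟫ := inner_sub_right _ _ _
            have h2 : ⟪w, u - F u⟫ = ⟪u - F u, w⟫ := real_inner_comm _ _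
            have h3 : ⟪F u, u - F u⟫ = ⟪u - F u, F u⟫ := real_inner_comm _ _
            linarith
    refine le_trans (add_le_add_left hsup _) ?_
    rw [← EReal.coe_add, EReal.coe_le_coe_iff, sub_sub_cancel]
    have e2 := norm_sub_sq_real u (F u)
    have h4 : ⟪F u, u - F u⟫ = ⟪F u, u⟫ - ⟪F u, F u⟫ := inner_sub_right _ _ _
    have h5 : ⟪F u, F u⟫ = ‖F u‖^2 := real_inner_self_eq_norm_sq _
    have h6 : ⟪u, F u⟫ = ⟪F u, u⟫ := real_inner_comm _ _
    linarith
  · refine le_iInf fun z => ?_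
    have hle : ((⟪F u, z⟫ - γ : ℝ) : EReal) ≤ ⨆ w : E, ((⟪w, z⟫ : ℝ) : EReal) - g w := by
      refine le_trans ?_ (le_iSup _ (F u))
      rw [hgu, ← EReal.coe_sub]
    refine le_trans ?_ (add_le_add_left hle _)
    rw [← EReal.coe_add, EReal.coe_le_coe_iff]
    have e1 := norm_sub_sq_real u z
    have e2 := norm_sub_sq_real u (F u)
    have e3 := norm_sub_sq_real (u - F u) z
    have e4 : ⟪u - F u, z⟫ = ⟪u, z⟫ - ⟪F u, z⟫ := inner_sub_left _ _ _
    have e5 := sq_nonneg ‖u - F u - z‖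
    linarith

private lemma boundA (g : E → EReal) (F : E → E)
    (hsgr : ∀ v w : E, (((g (F v)).toReal + ⟪v - F v, w - F v⟫ : ℝ) : EReal) ≤ g w)
    (hfin : ∀ y : E, g (F y) = (((g (F y)).toReal : ℝ) : EReal))
    (u v : E) :
    ⟪F v, u - v⟫ ≤ (‖u‖^2/2 - ‖u - F u‖^2/2 - (g (F u)).toReal)
      - (‖v‖^2/2 - ‖v - F v‖^2/2 - (g (F v)).toReal) := by
  have hsg : (g (F u)).toReal + ⟪u - F u, F v - F u⟫ ≤ (g (F v)).toReal := by
    have := hsgr u (F v)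
    rw [hfin v, EReal.coe_le_coe_iff] at this
    exact this
  have e0 := norm_sub_sq_real (F u) (F v)
  have c0 : ⟪u - F u, F v - F u⟫ = ⟪u, F v⟫ - ⟪u, F u⟫ - (⟪F u, F v⟫ - ⟪F u, F u⟫) := by
    rw [inner_sub_left, inner_sub_right, inner_sub_right]
  have s0 : ⟪F u, F u⟫ = ‖F u‖^2 := real_inner_self_eq_norm_sq _
  have e5 := sq_nonneg ‖F u - F v‖
  have e1 := norm_sub_sq_real u (F u)
  have e2 := norm_sub_sq_real v (F v)
  have e3 := norm_sub_sq_real (F u) (F v)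
  have c1 : ⟪v - F v, F u - F v⟫ = ⟪v, F u⟫ - ⟪v, F v⟫ - (⟪F v, F u⟫ - ⟪F v, F v⟫) := by
    rw [inner_sub_left, inner_sub_right, inner_sub_right]
  have c2 : ⟪u - v, F u - F v⟫ = ⟪u, F u⟫ - ⟪u, F v⟫ - (⟪v, F u⟫ - ⟪v, F v⟫) := by
    rw [inner_sub_left, inner_sub_right, inner_sub_right]
  have c3 : ⟪F v, u - v⟫ = ⟪F v, u⟫ - ⟪F v, v⟫ := inner_sub_right _ _ _
  have s1 : ⟪F v, F v⟫ = ‖F v‖^2 := real_inner_self_eq_norm_sq _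
  have s2 : ⟪F v, u⟫ = ⟪u, F v⟫ := real_inner_comm _ _
  have s3 : ⟪F v, v⟫ = ⟪v, F v⟫ := real_inner_comm _ _
  have s4 : ⟪F v, F u⟫ = ⟪F u, F v⟫ := real_inner_comm _ _
  linarith

private lemma boundB (g : E → EReal) (F : E → E)
    (hsgr : ∀ v w : E, (((g (F v)).toReal + ⟪v - F v, w - F v⟫ : ℝ) : EReal) ≤ g w)
    (hfin : ∀ y : E, g (F y) = (((g (F y)).toReal : ℝ) : EReal))
    (u v : E) :
    (‖u‖^2/2 - ‖u - F u‖^2/2 - (g (F u)).toReal)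
      - (‖v‖^2/2 - ‖v - F v‖^2/2 - (g (F v)).toReal) ≤ ⟪F v, u - v⟫ + ‖u - v‖^2/2 := by
  have hsg : (g (F v)).toReal + ⟪v - F v, F u - F v⟫ ≤ (g (F u)).toReal := by
    have := hsgr v (F u)
    rw [hfin u, EReal.coe_le_coe_iff] at this
    exact this
  have e1 := norm_sub_sq_real u (F u)
  have e2 := norm_sub_sq_real v (F v)
  have e3 := norm_sub_sq_real (F u) (F v)
  have e4 := norm_sub_sq_real (u - v) (F u - F v)
  have e5 := sq_nonneg ‖(u - v) - (F u - F v)‖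
  have e6 := norm_sub_sq_real u v
  have c1 : ⟪v - F v, F u - F v⟫ = ⟪v, F u⟫ - ⟪v, F v⟫ - (⟪F v, F u⟫ - ⟪F v, F v⟫) := by
    rw [inner_sub_left, inner_sub_right, inner_sub_right]
  have c2 : ⟪u - v, F u - F v⟫ = ⟪u, F u⟫ - ⟪u, F v⟫ - (⟪v, F u⟫ - ⟪v, F v⟫) := by
    rw [inner_sub_left, inner_sub_right, inner_sub_right]
  have c3 : ⟪F v, u - v⟫ = ⟪F v, u⟫ - ⟪F v, v⟫ := inner_sub_right _ _ _
  have s1 : ⟪F v, F v⟫ = ‖F v‖^2 := real_inner_self_eq_norm_sq _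
  have s2 : ⟪F v, u⟫ = ⟪u, F v⟫ := real_inner_comm _ _
  have s3 : ⟪F v, v⟫ = ⟪v, F v⟫ := real_inner_comm _ _
  have s4 : ⟪F v, F u⟫ = ⟪F u, F v⟫ := real_inner_comm _ _
  linarith

end aux

/-- When each `Fᵢ` is the proximity operator of a proper lsc convex function `gᵢ`, the
relaxed variational inequality problem is exactly the minimization over `C` of
`f : x ↦ (1/2) Σᵢ ωᵢ ((g̃ᵢ*)(Lᵢ x) - ⟪Lᵢ x, pᵢ⟫)`, where `g̃ᵢ*` is the Moreau envelope of
the Fenchel conjugate of `gᵢ`. -/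
theorem relaxed_iff_minimizer
    {H : Type*} [NormedAddCommGroup H] [InnerProductSpace ℝ H] [CompleteSpace H]
    {I : Type*} [Fintype I] [Nonempty I]
    (G : I → Type*) [∀ i, NormedAddCommGroup (G i)] [∀ i, InnerProductSpace ℝ (G i)]
    [∀ i, CompleteSpace (G i)]
    (ω : I → ℝ) (hω : ∀ i, ω i ∈ Set.Ioo (0 : ℝ) 1) (hωsum : ∑ i, ω i = 1)
    (C : Set H) (hCne : C.Nonempty) (hCcl : IsClosed C) (hCcv : Convex ℝ C)
    (p : ∀ i, G i) (L : ∀ i, H →L[ℝ] G i) (hL : ∀ i, L i ≠ 0)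
    (F : ∀ i, G i → G i)
    (hF : ∀ i, ∀ u v : G i, ⟪u - v, F i u - F i v⟫ ≥ ‖F i u - F i v‖ ^ 2)
    (g : ∀ i, G i → EReal)
    (hproper : ∀ i, ∃ z, g i z ≠ ⊤) (hnotbot : ∀ i, ∀ z, g i z ≠ ⊥)
    (hlsc : ∀ i, LowerSemicontinuous (g i))
    (hconv : ∀ i, ∀ z w : G i, ∀ a b : ℝ, 0 ≤ a → 0 ≤ b → a + b = 1 →
      g i (a • z + b • w) ≤ (a : EReal) * g i z + (b : EReal) * g i w)
    (hprox : ∀ i, ∀ y z : G i, z ≠ F i y →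
      g i (F i y) + ((‖y - F i y‖ ^ 2 / 2 : ℝ) : EReal)
        < g i z + ((‖y - z‖ ^ 2 / 2 : ℝ) : EReal))
    (env : ∀ i, G i → EReal)
    (henv : ∀ i, ∀ u : G i, env i u =
      ⨅ z : G i, ((⨆ w : G i, ((⟪w, z⟫ : ℝ) : EReal) - g i w)
        + ((‖u - z‖ ^ 2 / 2 : ℝ) : EReal)))
    (henvreal : ∀ i, ∀ u : G i, env i u ≠ ⊤ ∧ env i u ≠ ⊥)
    (f : H → ℝ)
    (hf : ∀ x : H, f x = (1 / 2) * ∑ i, ω i * ((env i (L i x)).toReal - ⟪L i x, p i⟫)) :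
    ∀ x : H,
      (x ∈ C ∧ ∀ y ∈ C, (∑ i, ω i * ⟪L i (y - x), F i (L i x) - p i⟫) ≥ 0) ↔
      (x ∈ C ∧ ∀ y ∈ C, f x ≤ f y) := by
  -- the real value of the envelope
  have hfin : ∀ i, ∀ y : G i, g i (F i y) = (((g i (F i y)).toReal : ℝ) : EReal) :=
    fun i => gfin (g i) (F i) (hproper i) (hnotbot i) (hprox i)
  have hsgr : ∀ i, ∀ v w : G i,
      (((g i (F i v)).toReal + ⟪v - F i v, w - F i v⟫ : ℝ) : EReal) ≤ g i w :=
    fun i => sg (g i) (F i) (hproper i) (hnotbot i) (hconv i) (hprox i)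
  have hir : ∀ i, ∀ u : G i, (env i u).toReal
      = ‖u‖^2/2 - ‖u - F i u‖^2/2 - (g i (F i u)).toReal := by
    intro i u
    rw [henv i u, env_formula (g i) (F i) (hproper i) (hnotbot i) (hconv i) (hprox i) u]
    exact EReal.toReal_coe _
  have keyA : ∀ i, ∀ u v : G i, ⟪F i v, u - v⟫ ≤ (env i u).toReal - (env i v).toReal := by
    intro i u v
    rw [hir i u, hir i v]
    exact boundA (g i) (F i) (hsgr i) (hfin i) u v
  have keyB : ∀ i, ∀ u v : G i,
      (env i u).toReal - (env i v).toReal ≤ ⟪F i v, u - v⟫ + ‖u - v‖^2/2 := by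
    intro i u v
    rw [hir i u, hir i v]
    exact boundB (g i) (F i) (hsgr i) (hfin i) u v
  intro x
  constructor
  · rintro ⟨hx, hvi⟩
    refine ⟨hx, fun y hy => ?_⟩
    have hterm : ∀ i, ω i * ⟪L i (y - x), F i (L i x) - p i⟫
        ≤ ω i * (((env i (L i y)).toReal - ⟪L i y, p i⟫)
            - ((env i (L i x)).toReal - ⟪L i x, p i⟫)) := by
      intro i
      refine mul_le_mul_of_nonneg_left ?_ (hω i).1.le
      have hA := keyA i (L i y) (L i x)
      have hm : (L i) (y - x) = L i y - L i x := map_sub _ _ _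
      have h1 : ⟪L i (y - x), F i (L i x) - p i⟫
          = ⟪L i y - L i x, F i (L i x)⟫ - ⟪L i y - L i x, p i⟫ := by
        rw [hm, inner_sub_right]
      have h2 : ⟪L i y, p i⟫ - ⟪L i x, p i⟫ = ⟪L i y - L i x, p i⟫ := (inner_sub_left _ _ _).symm
      have h3 : ⟪F i (L i x), L i y - L i x⟫ = ⟪L i y - L i x, F i (L i x)⟫ :=
        real_inner_comm _ _
      linarith
    have hsum := Finset.sum_le_sum (s := Finset.univ) (fun i _ => hterm i)
    have h0 := hvi y hy
    have hsplit : ∑ i, ω i * (((env i (L i y)).toReal - ⟪L i y, p i⟫)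
            - ((env i (L i x)).toReal - ⟪L i x, p i⟫))
        = (∑ i, ω i * ((env i (L i y)).toReal - ⟪L i y, p i⟫))
          - ∑ i, ω i * ((env i (L i x)).toReal - ⟪L i x, p i⟫) := by
      rw [← Finset.sum_sub_distrib]
      exact Finset.sum_congr rfl fun i _ => by ring
    rw [hf x, hf y]
    rw [hsplit] at hsum
    linarith
  · rintro ⟨hx, hmin⟩
    refine ⟨hx, fun y hy => ?_⟩
    set S := ∑ i, ω i * ⟪L i (y - x), F i (L i x) - p i⟫ with hS
    set Q := ∑ i, ω i * ‖(L i) (y - x)‖^2 with hQdef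
    have hQ0 : 0 ≤ Q := Finset.sum_nonneg fun i _ => mul_nonneg (hω i).1.le (sq_nonneg _)
    have key : ∀ t : ℝ, 0 < t → t ≤ 1 → 0 ≤ S + t * (Q/2) := by
      intro t ht ht1
      have hxt : x + t • (y - x) ∈ C := by
        have hmem := hCcv hx hy (by linarith : (0:ℝ) ≤ 1 - t) ht.le (by ring)
        have : (1 - t) • x + t • y = x + t • (y - x) := by
          rw [sub_smul, one_smul, smul_sub]; abel
        rwa [this] at hmem
      have hfle := hmin _ hxt
      have hterm : ∀ i, ω i * (((env i (L i (x + t • (y - x)))).toReal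
              - ⟪L i (x + t • (y - x)), p i⟫) - ((env i (L i x)).toReal - ⟪L i x, p i⟫))
          ≤ ω i * (t * ⟪L i (y - x), F i (L i x) - p i⟫ + t^2 * (‖(L i) (y - x)‖^2 / 2)) := by
        intro i
        refine mul_le_mul_of_nonneg_left ?_ (hω i).1.le
        have hm : (L i) (x + t • (y - x)) = L i x + t • (L i) (y - x) := by
          rw [map_add, map_smul]
        have hB := keyB i ((L i) (x + t • (y - x))) (L i x)
        have hsub : (L i) (x + t • (y - x)) - L i x = t • (L i) (y - x) := by
          rw [hm]; abel
        rw [hsub] at hB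
        have hn : ‖t • (L i) (y - x)‖^2 = t^2 * ‖(L i) (y - x)‖^2 := by
          rw [norm_smul, mul_pow, Real.norm_eq_abs, sq_abs]
        have hi1 : ⟪F i (L i x), t • (L i) (y - x)⟫ = t * ⟪F i (L i x), (L i) (y - x)⟫ :=
          real_inner_smul_right _ _ _
        have hi2 : ⟪L i (x + t • (y - x)), p i⟫ - ⟪L i x, p i⟫ = t * ⟪(L i) (y - x), p i⟫ := by
          rw [hm, inner_add_left, real_inner_smul_left]; ring
        have hi3 : ⟪L i (y - x), F i (L i x) - p i⟫
            = ⟪(L i) (y - x), F i (L i x)⟫ - ⟪(L i) (y - x), p i⟫ := inner_sub_right _ _ _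
        have hi4 : ⟪F i (L i x), (L i) (y - x)⟫ = ⟪(L i) (y - x), F i (L i x)⟫ :=
          real_inner_comm _ _
        nlinarith [hB]
      have hsum := Finset.sum_le_sum (s := Finset.univ) (fun i _ => hterm i)
      have hsplitL : ∑ i, ω i * (((env i (L i (x + t • (y - x)))).toReal
              - ⟪L i (x + t • (y - x)), p i⟫) - ((env i (L i x)).toReal - ⟪L i x, p i⟫))
          = (∑ i, ω i * ((env i (L i (x + t • (y - x)))).toReal
              - ⟪L i (x + t • (y - x)), p i⟫))
            - ∑ i, ω i * ((env i (L i x)).toReal - ⟪L i x, p i⟫) := by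
        rw [← Finset.sum_sub_distrib]
        exact Finset.sum_congr rfl fun i _ => by ring
      have hsplitR : ∑ i, ω i * (t * ⟪L i (y - x), F i (L i x) - p i⟫
              + t^2 * (‖(L i) (y - x)‖^2 / 2))
          = t * S + t^2/2 * Q := by
        rw [hS, hQdef, Finset.mul_sum, Finset.mul_sum, ← Finset.sum_add_distrib]
        exact Finset.sum_congr rfl fun i _ => by ring
      rw [hsplitL, hsplitR] at hsum
      have hfx := hf x
      have hfxt := hf (x + t • (y - x))
      have h0 : 0 ≤ t * S + t^2/2 * Q := by
        have : f (x + t • (y - x)) - f x ≥ 0 := by linarith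
        rw [hfxt, hfx] at this
        nlinarith [hsum, this]
      nlinarith [h0, ht]
    show 0 ≤ S
    by_contra hlt
    push_neg at hlt
    have hδpos : 0 < -S := by linarith
    have ht0 : (0:ℝ) < min 1 ((-S)/(Q/2+1)) := lt_min one_pos (by positivity)
    have hk := key _ ht0 (min_le_left _ _)
    have h2 : min 1 ((-S)/(Q/2+1)) * (Q/2) ≤ ((-S)/(Q/2+1)) * (Q/2) :=
      mul_le_mul_of_nonneg_right (min_le_right _ _) (by linarith)
    have h3 : ((-S)/(Q/2+1)) * (Q/2) < -S := by
      rw [div_mul_eq_mul_div, div_lt_iff₀ (by linarith)]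
      nlinarith
    linarith
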